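/- The c₀-component (coefficient of w_{0;1}) of any complete palindromic keyed generalised h-vector vanishes on the four 4-dimensional CD-polytopes CCCC·pt, DCC·pt, DD·pt and CCD·pt, whose flag vectors span a hyperplane H in the 5-dimensional span of 4-polytope flag vectors. -/
import Mathlib


open MvPolynomial

noncomputable section

/-- Polynomials in two variables x, y over ℚ (values of (flag-)h-vectors). -/
abbrev R2 : Type := MvPolynomial (Fin 2) ℚ

def px : R2 := X 0
def py : R2 := X 1

/-- Keys `k = ((d₁,…,d_r),(c₁,…,c_r))` indexing the formal symbols `w_k`. -/
abbrev Key : Type := List ℕ × List ℕ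

/-- The module of keyed polynomials `Σ_k p_k w_k`. -/
abbrev KMod : Type := Key →₀ R2

/-- The formal symbol `w_k`. -/
def wsym (k : Key) : KMod := Finsupp.single k 1

/-- `⟨j⟩ = y^j + x y^(j-1) + ⋯ + x^j`. -/
def br (j : ℕ) : R2 := ∑ t ∈ Finset.range (j + 1), px ^ t * py ^ (j - t)

/-- `⟨i,j⟩ = (xy)^i ⟨j⟩`. -/
def brr (i j : ℕ) : R2 := (px * py) ^ i * br j

/-- degree of a key: `2 Σ dᵢ + Σ cᵢ + 3r`. -/
def degKey (k : Key) : ℕ := 2 * k.1.sum + k.2.sum + 3 * k.1.length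

variable {V : Type} [AddCommGroup V] [Module ℚ V]

/-- the flag vector of the CD-word `w` applied to a point (`true` = cone `C`,
`false` = `D`), read with the outermost operator first. -/
def cdVec (Cop Dop : V →ₗ[ℚ] V) (ptv : V) : List Bool → V
  | [] => ptv
  | true :: w => Cop (cdVec Cop Dop ptv w)
  | false :: w => Dop (cdVec Cop Dop ptv w)

/-- dimension of the polytope `W·pt` for a CD-word `W`. -/
def wordDim (w : List Bool) : ℕ := w.count true + 2 * w.count false

/-- the `c₀`-component (the coefficient of `w_{0;1}`) of any
complete palindromic keyed generalised h-vector vanishes on the four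
4-dimensional CD-polytopes `CCCC·pt`, `DCC·pt`, `DD·pt` and `CCD·pt`, whose
flag vectors span a hyperplane (a 4-dimensional subspace) in the 5-dimensional
span of 4-polytope flag vectors. -/
theorem stmt16 {V : Type} [AddCommGroup V] [Module ℚ V]
    (Cop Dop Iop : V →ₗ[ℚ] V) (ptv : V)
    (h' g' : V →ₗ[ℚ] KMod)
    -- generalised h-vector axioms
    (hpt : h' ptv = wsym ([], []))
    (hC : ∀ v : V, h' (Cop v) = g' v + px • h' v)
    (hI : ∀ v : V, h' (Iop v) = (px + py) • h' v)
    (hDdef : Dop = Iop ∘ₗ Cop - Cop ∘ₗ Cop)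
    (hD : ∀ v : V, h' (Dop v) = (px * py) • h' v)
    (gC : ∀ v : V, g' (Cop v) = py • g' v)
    -- keyed and palindromic
    (hkeyed : ∀ (w : List Bool) (k : Key), h' (cdVec Cop Dop ptv w) k ≠ 0 →
      ∃ n : ℕ, (h' (cdVec Cop Dop ptv w) k).IsHomogeneous n
        ∧ wordDim w = n + degKey k)
    (hpal : ∀ (w : List Bool) (k : Key),
      rename ⇑(Equiv.swap (0 : Fin 2) 1) (h' (cdVec Cop Dop ptv w) k)
        = h' (cdVec Cop Dop ptv w) k)
    -- complete
    (hcomplete : Function.Injective h')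
    -- Bayer–Billera: the five 4-dimensional CD-words are linearly independent
    (hBB : LinearIndependent ℚ ![cdVec Cop Dop ptv [true, true, true, true],
      cdVec Cop Dop ptv [false, true, true], cdVec Cop Dop ptv [true, false, true],
      cdVec Cop Dop ptv [true, true, false], cdVec Cop Dop ptv [false, false]]) :
    h' (cdVec Cop Dop ptv [true, true, true, true]) ([0], [1]) = 0
    ∧ h' (cdVec Cop Dop ptv [false, true, true]) ([0], [1]) = 0
    ∧ h' (cdVec Cop Dop ptv [false, false]) ([0], [1]) = 0
    ∧ h' (cdVec Cop Dop ptv [true, true, false]) ([0], [1]) = 0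
    ∧ Module.finrank ℚ (Submodule.span ℚ
        ({cdVec Cop Dop ptv [true, true, true, true],
          cdVec Cop Dop ptv [false, true, true],
          cdVec Cop Dop ptv [false, false],
          cdVec Cop Dop ptv [true, true, false]} : Set V)) = 4
    ∧ Module.finrank ℚ (Submodule.span ℚ
        ({cdVec Cop Dop ptv [true, true, true, true],
          cdVec Cop Dop ptv [false, true, true],
          cdVec Cop Dop ptv [true, false, true],
          cdVec Cop Dop ptv [true, true, false],
          cdVec Cop Dop ptv [false, false]} : Set V)) = 5 := by
  -- abbreviation
  have cdT : ∀ w : List Bool, cdVec Cop Dop ptv (true :: w) = Cop (cdVec Cop Dop ptv w) :=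
    fun _ => rfl
  have cdF : ∀ w : List Bool, cdVec Cop Dop ptv (false :: w) = Dop (cdVec Cop Dop ptv w) :=
    fun _ => rfl
  set k : Key := (([0] : List ℕ), ([1] : List ℕ)) with hk
  have hdeg : degKey k = 4 := by simp [degKey, hk]
  -- coefficients of low-dimensional words at key k vanish
  have small : ∀ w : List Bool, wordDim w < 4 → h' (cdVec Cop Dop ptv w) k = 0 := by
    intro w hw
    by_contra hne
    obtain ⟨n, _, hn⟩ := hkeyed w k hne
    rw [hdeg] at hn
    omega
  have e2 : h' (cdVec Cop Dop ptv [true, true]) k = 0 := small _ (by decide)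
  have e3 : h' (cdVec Cop Dop ptv [true, true, true]) k = 0 := small _ (by decide)
  have eF : h' (cdVec Cop Dop ptv [false]) k = 0 := small _ (by decide)
  have eTF : h' (cdVec Cop Dop ptv [true, false]) k = 0 := small _ (by decide)
  -- g' coefficients
  have gcoef : ∀ v : V, g' v k = h' (Cop v) k - px * h' v k := by
    intro v
    rw [hC v]
    simp
  have gTT : g' (cdVec Cop Dop ptv [true, true]) k = 0 := by
    rw [gcoef, ← cdT [true, true], e3, e2]
    ring
  have gTTT : g' (cdVec Cop Dop ptv [true, true, true]) k = 0 := by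
    have : cdVec Cop Dop ptv [true, true, true] = Cop (cdVec Cop Dop ptv [true, true]) := rfl
    rw [this, gC]
    simp [gTT]
  have gF : g' (cdVec Cop Dop ptv [false]) k = 0 := by
    rw [gcoef, ← cdT, eTF, eF]
    ring
  have gTF : g' (cdVec Cop Dop ptv [true, false]) k = 0 := by
    have : cdVec Cop Dop ptv [true, false] = Cop (cdVec Cop Dop ptv [false]) := rfl
    rw [this, gC]
    simp [gF]
  -- the four coefficient computations
  have r1 : h' (cdVec Cop Dop ptv [true, true, true, true]) k = 0 := by
    rw [cdT, hC]
    simp [gTTT, e3]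
  have r2 : h' (cdVec Cop Dop ptv [false, true, true]) k = 0 := by
    rw [cdF, hD]
    simp [e2]
  have r3 : h' (cdVec Cop Dop ptv [false, false]) k = 0 := by
    rw [cdF, hD]
    simp [eF]
  have r4 : h' (cdVec Cop Dop ptv [true, true, false]) k = 0 := by
    rw [cdT, hC]
    simp [gTF, eTF]
  refine ⟨r1, r2, r3, r4, ?_, ?_⟩
  · -- rank 4
    set v : Fin 5 → V := ![cdVec Cop Dop ptv [true, true, true, true],
      cdVec Cop Dop ptv [false, true, true], cdVec Cop Dop ptv [true, false, true],
      cdVec Cop Dop ptv [true, true, false], cdVec Cop Dop ptv [false, false]] with hv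
    have hf : Function.Injective (![0, 1, 4, 3] : Fin 4 → Fin 5) := by decide
    have hli := hBB.comp _ hf
    have heq : v ∘ (![0, 1, 4, 3] : Fin 4 → Fin 5)
        = ![cdVec Cop Dop ptv [true, true, true, true],
            cdVec Cop Dop ptv [false, true, true],
            cdVec Cop Dop ptv [false, false],
            cdVec Cop Dop ptv [true, true, false]] := by
      funext i
      fin_cases i <;> rfl
    have := finrank_span_eq_card (R := ℚ) hli
    rw [heq] at this
    rw [show ({cdVec Cop Dop ptv [true, true, true, true],
          cdVec Cop Dop ptv [false, true, true],
          cdVec Cop Dop ptv [false, false],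
          cdVec Cop Dop ptv [true, true, false]} : Set V)
        = Set.range ![cdVec Cop Dop ptv [true, true, true, true],
            cdVec Cop Dop ptv [false, true, true],
            cdVec Cop Dop ptv [false, false],
            cdVec Cop Dop ptv [true, true, false]] by
      ext x
      simp [Matrix.range_cons, Matrix.range_empty]
      tauto]
    rw [this]
    rfl
  · -- rank 5
    have := finrank_span_eq_card (R := ℚ) hBB
    rw [show ({cdVec Cop Dop ptv [true, true, true, true],
          cdVec Cop Dop ptv [false, true, true],
          cdVec Cop Dop ptv [true, false, true],
          cdVec Cop Dop ptv [true, true, false],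
          cdVec Cop Dop ptv [false, false]} : Set V)
        = Set.range ![cdVec Cop Dop ptv [true, true, true, true],
            cdVec Cop Dop ptv [false, true, true],
            cdVec Cop Dop ptv [true, false, true],
            cdVec Cop Dop ptv [true, true, false],
            cdVec Cop Dop ptv [false, false]] by
      ext x
      simp [Matrix.range_cons, Matrix.range_empty]
      tauto]
    rw [this]
    rfl
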